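/- Let 2 < p < 6 and ω > 0. Then the squared L² norm of the soliton satisfies ∫_ℝ φ_ω(x)² dx = (p^{2/(p−2)} / ((p−2)·2^{(4−p)/(p−2)})) · ω^{(6−p)/(2(p−2))} · ∫_{−1}^{1} (1−t²)^{(4−p)/(p−2)} dt. In particular the function ω ↦ ∫_ℝ φ_ω² dx is a strictly increasing bijection of (0,∞) onto (0,∞). -/

import Mathlib

open Set

noncomputable section

/-- The NLS soliton at frequency `ω` for nonlinearity power `p`:
`φ_ω(x) = (ωp / (2 cosh²(((p−2)/2)√ω x)))^{1/(p−2)}`. -/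
def soliton (p ω : ℝ) (x : ℝ) : ℝ :=
  (ω * p / (2 * Real.cosh ((p - 2) / 2 * Real.sqrt ω * x) ^ 2)) ^ (1 / (p - 2))

open Real MeasureTheory

noncomputable def Th (y : ℝ) : ℝ := Real.sinh y / Real.cosh y

lemma Th_lt_one (y : ℝ) : Th y < 1 := by
  rw [Th, div_lt_one (Real.cosh_pos y)]; exact Real.sinh_lt_cosh y

lemma neg_one_lt_Th (y : ℝ) : -1 < Th y := by
  rw [Th, lt_div_iff₀ (Real.cosh_pos y)]
  have h := Real.sinh_lt_cosh (-y)
  rw [Real.sinh_neg, Real.cosh_neg] at h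
  linarith

lemma hasDerivAt_Th (y : ℝ) : HasDerivAt Th ((Real.cosh y ^ 2)⁻¹) y := by
  have h := (Real.hasDerivAt_sinh y).div (Real.hasDerivAt_cosh y) (Real.cosh_pos y).ne'
  have h2 := Real.cosh_sq_sub_sinh_sq y
  have e : (Real.cosh y ^ 2)⁻¹ = (Real.cosh y * Real.cosh y - Real.sinh y * Real.sinh y) / Real.cosh y ^ 2 := by
    rw [inv_eq_one_div]; congr 1
    nlinarith [Real.cosh_pos y]
  rw [e]; exact h

lemma Th_strictMono : StrictMono Th := by
  have hd : ∀ y, deriv Th y = (Real.cosh y ^ 2)⁻¹ := fun y => (hasDerivAt_Th y).deriv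
  refine strictMono_of_deriv_pos fun y => ?_
  rw [hd]; positivity

lemma one_sub_Th_sq (y : ℝ) : 1 - Th y ^ 2 = (Real.cosh y ^ 2)⁻¹ := by
  have h2 := Real.cosh_sq_sub_sinh_sq y
  have := (Real.cosh_pos y).ne'
  rw [Th]
  field_simp
  exact h2

lemma range_Th : Set.range Th = Ioo (-1 : ℝ) 1 := by
  ext t
  constructor
  · rintro ⟨y, rfl⟩
    exact ⟨neg_one_lt_Th y, Th_lt_one y⟩
  · rintro ⟨h1, h2⟩
    have h1t : (0:ℝ) < 1 - t := by linarith
    have h1t' : (0:ℝ) < 1 + t := by linarith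
    refine ⟨Real.log ((1 + t) / (1 - t)) / 2, ?_⟩
    have hA : (0:ℝ) < (1 + t) / (1 - t) := div_pos h1t' h1t
    set y := Real.log ((1 + t) / (1 - t)) / 2 with hy
    have he : Real.exp y * Real.exp y = (1 + t) / (1 - t) := by
      rw [← Real.exp_add, hy]
      rw [show Real.log ((1+t)/(1-t)) / 2 + Real.log ((1+t)/(1-t)) / 2
          = Real.log ((1+t)/(1-t)) by ring, Real.exp_log hA]
    rw [Th, Real.sinh_eq, Real.cosh_eq, Real.exp_neg]
    have hey := Real.exp_pos y
    rw [div_eq_iff (by positivity), ← sub_eq_zero]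
    have expand : (Real.exp y - (Real.exp y)⁻¹) / 2 -
        t * ((Real.exp y + (Real.exp y)⁻¹) / 2)
        = ((Real.exp y * Real.exp y) * (1 - t) - (1 + t)) / (2 * Real.exp y) := by
      field_simp
      ring
    rw [expand, he]
    rw [div_eq_zero_iff]
    left
    field_simp
    ring

lemma cosh_ge (y : ℝ) : Real.exp y / 2 ≤ Real.cosh y := by
  rw [Real.cosh_eq]
  have := (Real.exp_pos (-y)).le
  linarith

lemma sech_le (a : ℝ) (ha : 0 < a) (y : ℝ) :
    ((Real.cosh y ^ 2)⁻¹) ^ a ≤ 4 ^ a * Real.exp (-(2 * a) * y) := by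
  have hc := Real.cosh_pos y
  have he := Real.exp_pos y
  have h1 : (Real.cosh y ^ 2)⁻¹ ≤ 4 * Real.exp (-(2 * y)) := by
    have h2 : Real.exp y * Real.exp y / 4 ≤ Real.cosh y ^ 2 := by
      have := cosh_ge y
      nlinarith
    have h3 := inv_anti₀ (by positivity : (0:ℝ) < Real.exp y * Real.exp y / 4) h2
    refine h3.trans_eq ?_
    rw [show (2:ℝ) * y = y + y by ring, Real.exp_neg, Real.exp_add]
    field_simp
  calc ((Real.cosh y ^ 2)⁻¹) ^ a ≤ (4 * Real.exp (-(2 * y))) ^ a :=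
        Real.rpow_le_rpow (by positivity) h1 ha.le
    _ = 4 ^ a * Real.exp (-(2 * a) * y) := by
        rw [Real.mul_rpow (by norm_num) (Real.exp_pos _).le, ← Real.exp_mul]
        ring_nf

lemma continuous_sech (a : ℝ) : Continuous (fun y : ℝ => ((Real.cosh y ^ 2)⁻¹) ^ a) := by
  apply Continuous.rpow_const
  · exact (Real.continuous_cosh.pow 2).inv₀ fun y => (pow_pos (Real.cosh_pos y) 2).ne'
  · intro y
    exact Or.inl (inv_ne_zero (pow_pos (Real.cosh_pos y) 2).ne')

lemma integrable_sech (a : ℝ) (ha : 0 < a) :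
    Integrable (fun y : ℝ => ((Real.cosh y ^ 2)⁻¹) ^ a) := by
  set H := fun y : ℝ => ((Real.cosh y ^ 2)⁻¹) ^ a with hH
  have hmeas : AEStronglyMeasurable H volume := (continuous_sech a).aestronglyMeasurable
  have hIoi : IntegrableOn H (Ioi 0) := by
    have hint : IntegrableOn (fun y : ℝ => 4 ^ a * Real.exp (-(2 * a) * y)) (Ioi 0) :=
      (exp_neg_integrableOn_Ioi 0 (by positivity : (0:ℝ) < 2 * a)).const_mul _
    refine Integrable.mono' hint hmeas.restrict ?_
    filter_upwards with y
    rw [Real.norm_eq_abs, abs_of_nonneg (Real.rpow_nonneg (by positivity) a)]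
    exact sech_le a ha y
  have hIio : IntegrableOn H (Iio 0) := by
    have heven : H ∘ (fun y : ℝ => -y) = H := by
      funext y; simp only [Function.comp_apply, hH, Real.cosh_neg]
    have := (MeasurePreserving.integrableOn_comp_preimage
      (Measure.measurePreserving_neg (volume : Measure ℝ))
      (Homeomorph.neg ℝ).measurableEmbedding (f := H) (s := Ioi 0)).2 hIoi
    rw [heven] at this
    simpa using this
  have : IntegrableOn H (Iio 0 ∪ Ici 0) := by
    refine hIio.union ?_
    rwa [integrableOn_Ici_iff_integrableOn_Ioi]
  rwa [Iio_union_Ici, integrableOn_univ] at this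

lemma integral_sech_pos (a : ℝ) (ha : 0 < a) :
    0 < ∫ y : ℝ, ((Real.cosh y ^ 2)⁻¹) ^ a := by
  rw [integral_pos_iff_support_of_nonneg
      (fun y => Real.rpow_nonneg (by positivity) a) (integrable_sech a ha)]
  have : Function.support (fun y : ℝ => ((Real.cosh y ^ 2)⁻¹) ^ a) = univ := by
    ext y
    simp only [Function.mem_support, mem_univ, iff_true]
    exact (Real.rpow_pos_of_pos (by positivity) a).ne'
  rw [this]
  simp

lemma key_cov (γ : ℝ) : ∫ t in Ioo (-1:ℝ) 1, (1 - t ^ 2) ^ γ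
    = ∫ y : ℝ, ((Real.cosh y ^ 2)⁻¹) ^ (γ + 1) := by
  rw [← range_Th, ← image_univ,
    integral_image_eq_integral_abs_deriv_smul MeasurableSet.univ
      (fun y _ => (hasDerivAt_Th y).hasDerivWithinAt) Th_strictMono.injective.injOn
      (fun t => (1 - t ^ 2) ^ γ)]
  rw [setIntegral_univ]
  congr 1
  funext y
  have hpos : (0:ℝ) < (Real.cosh y ^ 2)⁻¹ := by positivity
  rw [smul_eq_mul, abs_of_pos hpos, one_sub_Th_sq, Real.rpow_add hpos, Real.rpow_one]
  ring

lemma mass_eq (p w : ℝ) (hp2 : 2 < p) (hw : 0 < w) :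
    (∫ x : ℝ, soliton p w x ^ 2)
      = (p ^ (2/(p-2)) / ((p-2) * (2:ℝ) ^ (2/(p-2) - 1))) * w ^ (2/(p-2) - 1/2)
        * ∫ y : ℝ, ((Real.cosh y ^ 2)⁻¹) ^ (2/(p-2)) := by
  have hp2' : (0:ℝ) < p - 2 := by linarith
  have hp0 : (0:ℝ) < p := by linarith
  set s : ℝ := 2 / (p - 2) with hs_def
  have hs : 0 < s := by positivity
  set c : ℝ := (p - 2) / 2 * Real.sqrt w with hc_def
  have hsw : 0 < Real.sqrt w := Real.sqrt_pos.2 hw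
  have hc : 0 < c := by positivity
  have hA : (0:ℝ) < w * p / 2 := by positivity
  have step1 : ∀ x : ℝ, soliton p w x ^ 2
      = (w * p / 2) ^ s * ((Real.cosh (c * x) ^ 2)⁻¹) ^ s := by
    intro x
    rw [soliton]
    have hc2 : (0:ℝ) < Real.cosh (c * x) ^ 2 := pow_pos (Real.cosh_pos _) 2
    have hb : w * p / (2 * Real.cosh (c * x) ^ 2)
        = w * p / 2 * (Real.cosh (c * x) ^ 2)⁻¹ := by ring
    rw [hb, ← Real.rpow_natCast (_ ^ (1 / (p-2))) 2,
      ← Real.rpow_mul (by positivity), Real.mul_rpow hA.le (by positivity)]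
    norm_num
    have hse : (p-2)⁻¹ * 2 = s := by rw [hs_def]; ring
    rw [hse]
  calc (∫ x : ℝ, soliton p w x ^ 2)
      = ∫ x : ℝ, (w * p / 2) ^ s * ((Real.cosh (c * x) ^ 2)⁻¹) ^ s := by
        congr 1; funext x; exact step1 x
    _ = (w * p / 2) ^ s * ∫ x : ℝ, ((Real.cosh (c * x) ^ 2)⁻¹) ^ s :=
        integral_const_mul _ _
    _ = (w * p / 2) ^ s * (c⁻¹ * ∫ y : ℝ, ((Real.cosh y ^ 2)⁻¹) ^ s) := by
        rw [Measure.integral_comp_mul_left (fun y => ((Real.cosh y ^ 2)⁻¹) ^ s) c,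
          smul_eq_mul, abs_of_pos (inv_pos.2 hc)]
    _ = (p ^ s / ((p-2) * (2:ℝ) ^ (s - 1))) * w ^ (s - 1/2)
        * ∫ y : ℝ, ((Real.cosh y ^ 2)⁻¹) ^ s := by
        rw [← mul_assoc]
        congr 1
        have h1 : w * p / 2 = w * (p / 2) := by ring
        rw [h1, Real.mul_rpow hw.le (by positivity), Real.div_rpow hp0.le (by norm_num),
          Real.rpow_sub two_pos, Real.rpow_sub hw, Real.rpow_one, hc_def, Real.sqrt_eq_rpow]
        have h2s : ((2:ℝ) ^ s) ≠ 0 := (Real.rpow_pos_of_pos two_pos s).ne'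
        have hws : (w ^ ((1:ℝ)/2)) ≠ 0 := (Real.rpow_pos_of_pos hw _).ne'
        have hw12 : w ^ ((1:ℝ)/2) = w ^ (1/2 : ℝ) := rfl
        field_simp

/-- for 2 < p < 6 and ω > 0 the squared L² norm of the soliton equals
`(p^{2/(p−2)}/((p−2)·2^{(4−p)/(p−2)})) ω^{(6−p)/(2(p−2))} ∫_{−1}^{1}(1−t²)^{(4−p)/(p−2)}dt`;
in particular `ω ↦ ∫ φ_ω²` is a strictly increasing bijection of `(0,∞)` onto `(0,∞)`. -/
theorem soliton_mass_formula (p ω : ℝ) (hp2 : 2 < p) (hp6 : p < 6) (hω : 0 < ω) :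
    (∫ x : ℝ, soliton p ω x ^ 2) =
      p ^ (2 / (p - 2)) / ((p - 2) * (2 : ℝ) ^ ((4 - p) / (p - 2))) *
        ω ^ ((6 - p) / (2 * (p - 2))) *
        ∫ t in (-1 : ℝ)..1, (1 - t ^ 2) ^ ((4 - p) / (p - 2)) ∧
    StrictMonoOn (fun w : ℝ => ∫ x : ℝ, soliton p w x ^ 2) (Ioi 0) ∧
    BijOn (fun w : ℝ => ∫ x : ℝ, soliton p w x ^ 2) (Ioi 0) (Ioi 0) := by
  have hp2' : (0:ℝ) < p - 2 := by linarith
  have hp0 : (0:ℝ) < p := by linarith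
  have hs : (0:ℝ) < 2 / (p - 2) := by positivity
  have hβ : (0:ℝ) < 2 / (p - 2) - 1/2 := by
    rw [sub_pos, div_lt_div_iff₀ (by norm_num) hp2']
    linarith
  have e1 : (4 - p) / (p - 2) = 2 / (p - 2) - 1 := by field_simp; ring
  have e2 : (6 - p) / (2 * (p - 2)) = 2 / (p - 2) - 1/2 := by
    field_simp; ring
  set J : ℝ := ∫ y : ℝ, ((Real.cosh y ^ 2)⁻¹) ^ (2 / (p - 2)) with hJ_def
  have hJ : 0 < J := integral_sech_pos _ hs
  have hC : (0:ℝ) < p ^ (2/(p-2)) / ((p-2) * (2:ℝ) ^ (2/(p-2) - 1)) := by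
    have := Real.rpow_pos_of_pos hp0 (2/(p-2))
    have := Real.rpow_pos_of_pos (two_pos (α := ℝ)) (2/(p-2) - 1)
    positivity
  have hI : (∫ t in (-1 : ℝ)..1, (1 - t ^ 2) ^ ((4 - p) / (p - 2))) = J := by
    rw [intervalIntegral.integral_of_le (by norm_num : (-1:ℝ) ≤ 1),
      integral_Ioc_eq_integral_Ioo, key_cov]
    rw [hJ_def]
    congr 1
    funext y
    congr 1
    rw [e1]; ring
  have hF : ∀ w ∈ Ioi (0:ℝ), (∫ x : ℝ, soliton p w x ^ 2)
      = (p ^ (2/(p-2)) / ((p-2) * (2:ℝ) ^ (2/(p-2) - 1)) * J) * w ^ (2/(p-2) - 1/2) := by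
    intro w hw
    rw [mass_eq p w hp2 hw]
    ring
  set K : ℝ := p ^ (2/(p-2)) / ((p-2) * (2:ℝ) ^ (2/(p-2) - 1)) * J with hK_def
  have hK : 0 < K := mul_pos hC hJ
  have hmono : StrictMonoOn (fun w : ℝ => ∫ x : ℝ, soliton p w x ^ 2) (Ioi 0) := by
    intro a ha b hb hab
    show (∫ x : ℝ, soliton p a x ^ 2) < ∫ x : ℝ, soliton p b x ^ 2
    rw [hF a ha, hF b hb]
    exact mul_lt_mul_of_pos_left
      (Real.rpow_lt_rpow (le_of_lt ha) hab hβ) hK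
  refine ⟨?_, hmono, ?_⟩
  · rw [mass_eq p ω hp2 hω, hI, e1, e2]
  · refine ⟨fun w hw => ?_, hmono.injOn, fun y hy => ?_⟩
    · show (0:ℝ) < ∫ x : ℝ, soliton p w x ^ 2
      rw [hF w hw]
      exact mul_pos hK (Real.rpow_pos_of_pos hw _)
    · have hyK : 0 < y / K := div_pos hy hK
      refine ⟨(y / K) ^ (2/(p-2) - 1/2)⁻¹, Real.rpow_pos_of_pos hyK _, ?_⟩
      show (∫ x : ℝ, soliton p ((y / K) ^ (2/(p-2) - 1/2)⁻¹) x ^ 2) = y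
      rw [hF _ (Real.rpow_pos_of_pos hyK _), ← Real.rpow_mul hyK.le,
        inv_mul_cancel₀ hβ.ne', Real.rpow_one, mul_comm, div_mul_cancel₀ _ hK.ne']

end
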